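/- Let g be the Dirichlet inverse of ω + 1 and C_Ω(n) = Ω(n)! ∏_{p^α || n} (1/α!). Then for every n ≥ 1, g(n) = ∑_{d|n} λ(d) C_Ω(d) μ(n/d). -/

import Mathlib

open ArithmeticFunction Nat

/-- `C_Ω(n) = Ω(n)! / ∏_{p^α || n} α!`. -/
def COmega (n : ℕ) : ℕ :=
  (cardFactors n)! / ∏ p ∈ n.primeFactors, (n.factorization p)!

open Finset
open scoped ArithmeticFunction.zeta ArithmeticFunction.Moebius ArithmeticFunction.Omega ArithmeticFunction.omega

lemma COmega_one : COmega 1 = 1 := by simp [COmega]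

lemma cardFactors_eq_sum (n : ℕ) : Ω n = ∑ p ∈ n.primeFactors, n.factorization p := by
  rcases eq_or_ne n 0 with rfl | hn
  · simp
  rw [cardFactors_apply]
  have : (n.primeFactorsList : Multiset ℕ).card = n.primeFactorsList.length := by simp
  rw [← this, ← Multiset.toFinset_sum_count_eq]
  rw [show n.primeFactors = n.primeFactorsList.toFinset from rfl, List.toFinset]
  refine Finset.sum_congr rfl fun p _ => ?_
  rw [← Nat.primeFactorsList_count_eq, Multiset.coe_count]

lemma multinomial_subset {s t : Finset ℕ} {f : ℕ → ℕ} (h : s ⊆ t)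
    (h0 : ∀ i ∈ t, i ∉ s → f i = 0) : Nat.multinomial t f = Nat.multinomial s f := by
  unfold Nat.multinomial
  rw [Finset.sum_subset h (by intro x hx hxs; exact h0 x hx hxs),
    Finset.prod_subset h (by intro x hx hxs; simp [h0 x hx hxs])]

lemma multinomial_rec {s : Finset ℕ} {f : ℕ → ℕ} (hs : ∀ i ∈ s, 1 ≤ f i)
    (hN : (∑ i ∈ s, f i) ≠ 0) :
    Nat.multinomial s f = ∑ i ∈ s, Nat.multinomial s (Function.update f i (f i - 1)) := by
  have hprodpos : 0 < ∏ i ∈ s, (f i)! := Finset.prod_pos fun i _ => Nat.factorial_pos _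
  apply Nat.eq_of_mul_eq_mul_left hprodpos
  rw [Nat.multinomial_spec, Finset.mul_sum]
  have key : ∀ i ∈ s, (∏ j ∈ s, (f j)!) * Nat.multinomial s (Function.update f i (f i - 1))
      = f i * ((∑ j ∈ s, f j) - 1)! := by
    intro i hi
    have hf1 : 1 ≤ f i := hs i hi
    have hprod : (∏ j ∈ s, (f j)!) = f i * ∏ j ∈ s, (Function.update f i (f i - 1) j)! := by
      simp only [Function.apply_update (fun _ n => n !) f]
      rw [Finset.prod_update_of_mem hi, ← Finset.mul_prod_erase s _ hi, ← mul_assoc,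
        Finset.erase_eq]
      congr 1
      rw [← Nat.succ_pred_eq_of_pos hf1, Nat.factorial_succ]
      simp [Nat.succ_pred_eq_of_pos hf1]
    have hsum : (∑ j ∈ s, Function.update f i (f i - 1) j) = (∑ j ∈ s, f j) - 1 := by
      rw [Finset.sum_update_of_mem hi, ← Finset.add_sum_erase s f hi, Finset.erase_eq]
      omega
    rw [hprod, mul_assoc, Nat.multinomial_spec, hsum]
  rw [Finset.sum_congr rfl key, ← Finset.sum_mul]
  rw [← Nat.succ_pred_eq_of_pos (Nat.pos_of_ne_zero hN), Nat.factorial_succ]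
  simp [Nat.succ_pred_eq_of_pos (Nat.pos_of_ne_zero hN)]

lemma COmega_eq_multinomial (n : ℕ) :
    COmega n = Nat.multinomial n.primeFactors n.factorization := by
  rw [COmega, Nat.multinomial, cardFactors_eq_sum]

lemma COmega_rec {n : ℕ} (hn : 2 ≤ n) :
    COmega n = ∑ p ∈ n.primeFactors, COmega (n / p) := by
  have hn0 : n ≠ 0 := by omega
  have hΩ : Ω n ≠ 0 := by
    rw [cardFactors_apply]
    simp only [ne_eq, List.length_eq_zero_iff]
    intro h
    have := Nat.prod_primeFactorsList hn0
    rw [h] at this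
    simp at this
    omega
  have hpos : ∀ p ∈ n.primeFactors, 1 ≤ n.factorization p := by
    intro p hp
    rw [← Nat.support_factorization] at hp
    exact Nat.one_le_iff_ne_zero.mpr (Finsupp.mem_support_iff.mp hp)
  rw [COmega_eq_multinomial, multinomial_rec hpos (by rwa [← cardFactors_eq_sum])]
  refine Finset.sum_congr rfl fun p hp => ?_
  obtain ⟨hpp, hpd, -⟩ := Nat.mem_primeFactors.mp hp
  have hnp0 : n / p ≠ 0 := by
    have := Nat.div_pos (Nat.le_of_dvd (by omega) hpd) hpp.pos
    omega
  have hfac : ∀ q ∈ n.primeFactors,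
      ((n / p).factorization : ℕ → ℕ) q
        = Function.update (n.factorization : ℕ → ℕ) p (n.factorization p - 1) q := by
    intro q hq
    rw [Nat.factorization_div hpd, Finsupp.tsub_apply, hpp.factorization, Finsupp.single_apply,
      Function.update_apply]
    rcases eq_or_ne q p with h | h
    · simp [h]
    · simp [h, (Ne.symm h : p ≠ q)]
  calc Nat.multinomial n.primeFactors
        (Function.update (n.factorization : ℕ → ℕ) p (n.factorization p - 1))
      = Nat.multinomial n.primeFactors ((n / p).factorization : ℕ → ℕ) :=
        (Nat.multinomial_congr hfac).symm
    _ = Nat.multinomial (n / p).primeFactors ((n / p).factorization : ℕ → ℕ) := by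
        refine multinomial_subset (Nat.primeFactors_mono (Nat.div_dvd_of_dvd hpd) hn0)
          fun q hq hq2 => ?_
        rw [← Nat.support_factorization] at hq2
        exact Finsupp.notMem_support_iff.mp hq2
    _ = COmega (n / p) := (COmega_eq_multinomial _).symm

def chi : ArithmeticFunction ℤ := ⟨fun n => if n.Prime then 1 else 0, by simp [Nat.not_prime_zero]⟩

@[simp] lemma chi_apply (n : ℕ) : chi n = if n.Prime then 1 else 0 := rfl

def hAF : ArithmeticFunction ℤ :=
  ⟨fun n => if n = 0 then 0 else (-1) ^ (Ω n) * COmega n, by simp⟩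

lemma hAF_apply {n : ℕ} (hn : n ≠ 0) : hAF n = (-1) ^ (Ω n) * COmega n := if_neg hn

lemma divisors_filter_prime (n : ℕ) : n.divisors.filter Nat.Prime = n.primeFactors := by
  ext p
  simp only [Finset.mem_filter, Nat.mem_divisors, Nat.mem_primeFactors]
  tauto

lemma one_add_chi_mul_hAF : ((1 : ArithmeticFunction ℤ) + chi) * hAF = 1 := by
  ext n
  rcases Nat.lt_or_ge n 2 with h | h
  · interval_cases n
    · simp
    · simp [mul_apply, hAF_apply, COmega_one, Nat.not_prime_one]
  · have hn0 : n ≠ 0 := by omega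
    rw [mul_apply, Nat.sum_divisorsAntidiagonal (f := fun a b => ((1 : ArithmeticFunction ℤ) + chi) a * hAF b),
      one_apply_ne (by omega : n ≠ 1)]
    have : ∀ d ∈ n.divisors, ((1 : ArithmeticFunction ℤ) + chi) d * hAF (n / d)
        = (if d = 1 then hAF n else 0) + (if d.Prime then hAF (n / d) else 0) := by
      intro d hd
      rw [ArithmeticFunction.add_apply, one_apply, chi_apply, add_mul]
      congr 1
      · split_ifs with h1 <;> simp [h1]
      · split_ifs with h1 <;> simp
    rw [Finset.sum_congr rfl this, Finset.sum_add_distrib, Finset.sum_ite_eq' n.divisors 1 (fun _ => hAF n),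
      if_pos (Nat.one_mem_divisors.mpr hn0), ← Finset.sum_filter, divisors_filter_prime]
    have hterm : ∀ p ∈ n.primeFactors, hAF (n / p) = -((-1) ^ (Ω n) * COmega (n / p)) := by
      intro p hp
      obtain ⟨hpp, hpd, -⟩ := Nat.mem_primeFactors.mp hp
      have hq0 : n / p ≠ 0 := Nat.div_ne_zero_iff_of_dvd hpd |>.mpr ⟨hn0, hpp.ne_zero⟩
      have hΩ : Ω n = Ω (n / p) + 1 := by
        conv_lhs => rw [← Nat.div_mul_cancel hpd]
        rw [cardFactors_mul hq0 hpp.ne_zero, cardFactors_apply_prime hpp]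
      rw [hAF_apply hq0, hΩ, pow_succ]
      ring
    rw [Finset.sum_congr rfl hterm, Finset.sum_neg_distrib, ← Finset.mul_sum, ← Nat.cast_sum,
      ← COmega_rec h, hAF_apply hn0]
    ring

lemma zeta_mul_one_add_chi_apply {d : ℕ} (hd : d ≠ 0) :
    (((ζ : ArithmeticFunction ℤ)) * ((1 : ArithmeticFunction ℤ) + chi)) d
      = (ω d : ℤ) + 1 := by
  rw [coe_zeta_mul_apply]
  have : ∀ e ∈ d.divisors, ((1 : ArithmeticFunction ℤ) + chi) e
      = (if e = 1 then 1 else 0) + (if e.Prime then 1 else 0) := by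
    intro e he
    rw [ArithmeticFunction.add_apply, one_apply, chi_apply]
  rw [Finset.sum_congr rfl this, Finset.sum_add_distrib,
    Finset.sum_ite_eq' d.divisors 1 (fun _ => (1 : ℤ)),
    if_pos (Nat.one_mem_divisors.mpr hd), ← Finset.sum_filter, divisors_filter_prime,
    Finset.sum_const, nsmul_eq_mul, mul_one]
  have : d.primeFactors.card = ω d := by
    rw [cardDistinctFactors_apply, Nat.primeFactors, List.card_toFinset]
  rw [this]
  ring

lemma key_conv : ((ζ : ArithmeticFunction ℤ) * ((1 : ArithmeticFunction ℤ) + chi))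
    * (hAF * (μ : ArithmeticFunction ℤ)) = 1 := by
  rw [mul_assoc, ← mul_assoc ((1 : ArithmeticFunction ℤ) + chi), one_add_chi_mul_hAF, one_mul,
    coe_zeta_mul_moebius]

lemma F_spec {n : ℕ} (hn : 2 ≤ n) :
    ∑ d ∈ n.divisors, ((ω d : ℤ) + 1) * (hAF * (μ : ArithmeticFunction ℤ)) (n / d) = 0 := by
  have h0 : (((ζ : ArithmeticFunction ℤ) * ((1 : ArithmeticFunction ℤ) + chi))
      * (hAF * (μ : ArithmeticFunction ℤ))) n = (1 : ArithmeticFunction ℤ) n := by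
    rw [key_conv]
  rw [mul_apply, Nat.sum_divisorsAntidiagonal
      (f := fun a b => ((ζ : ArithmeticFunction ℤ) * ((1 : ArithmeticFunction ℤ) + chi)) a
        * (hAF * (μ : ArithmeticFunction ℤ)) b),
    one_apply_ne (by omega : n ≠ 1)] at h0
  rw [← h0]
  refine Finset.sum_congr rfl fun d hd => ?_
  rw [zeta_mul_one_add_chi_apply (Nat.pos_of_mem_divisors hd).ne']

theorem g_eq
    (g : ℕ → ℤ)
    (hg1 : g 1 = 1)
    (hg : ∀ n : ℕ, 2 ≤ n → ∑ d ∈ n.divisors, ((cardDistinctFactors d : ℤ) + 1) * g (n / d) = 0) :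
    ∀ n : ℕ, 1 ≤ n → g n = (hAF * (μ : ArithmeticFunction ℤ)) n := by
  intro n
  induction n using Nat.strong_induction_on with
  | _ n ih =>
    intro hn1
    rcases eq_or_lt_of_le hn1 with h1 | h2
    · rw [← h1, hg1, mul_apply_one, hAF_apply one_ne_zero, COmega_one]
      simp
    · have hn2 : 2 ≤ n := h2
      have hn0 : n ≠ 0 := by omega
      have h1mem : 1 ∈ n.divisors := Nat.one_mem_divisors.mpr hn0
      have hgsplit := hg n hn2
      rw [← Finset.add_sum_erase _ _ h1mem] at hgsplit
      have hFsplit := F_spec hn2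
      rw [← Finset.add_sum_erase _ _ h1mem] at hFsplit
      simp only [cardDistinctFactors_one, Nat.cast_zero, zero_add, one_mul, Nat.div_one]
        at hgsplit hFsplit
      have heq : ∀ d ∈ n.divisors.erase 1,
          ((ω d : ℤ) + 1) * g (n / d) = ((ω d : ℤ) + 1) * (hAF * (μ : ArithmeticFunction ℤ)) (n / d) := by
        intro d hd
        obtain ⟨hd1, hdmem⟩ := Finset.mem_erase.mp hd
        have hddvd : d ∣ n := (Nat.mem_divisors.mp hdmem).1
        have hd0 := Nat.pos_of_mem_divisors hdmem
        have hd2 : 2 ≤ d := by omega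
        have hlt : n / d < n := Nat.div_lt_self (by omega) hd2
        have hge : 1 ≤ n / d := Nat.div_pos (Nat.le_of_dvd (by omega) hddvd) hd0
        rw [ih (n / d) hlt hge]
      rw [Finset.sum_congr rfl heq] at hgsplit
      linarith [hgsplit, hFsplit]

theorem g_eq_sum_liouville_COmega_moebius
    (g : ℕ → ℤ)
    (hg1 : g 1 = 1)
    (hg : ∀ n : ℕ, 2 ≤ n → ∑ d ∈ n.divisors, ((cardDistinctFactors d : ℤ) + 1) * g (n / d) = 0) :
    ∀ n : ℕ, 1 ≤ n →
      g n = ∑ d ∈ n.divisors, (-1 : ℤ) ^ (cardFactors d) * (COmega d : ℤ) * moebius (n / d) := by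
  intro n hn
  rw [g_eq g hg1 hg n hn, mul_apply,
    Nat.sum_divisorsAntidiagonal (f := fun a b => hAF a * (μ : ArithmeticFunction ℤ) b)]
  refine Finset.sum_congr rfl fun d hd => ?_
  rw [hAF_apply (Nat.pos_of_mem_divisors hd).ne']
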